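/- Let ρ = ρ(x) = (1/2)(I + x·σ) be a qubit state with Bloch vector x ∈ ℝ³ and define the n-fold tangent vectors Dᵢ(x) = Σ_{ℓ=1}^{n} ρ^{⊗(ℓ-1)} ⊗ (σᵢ/2) ⊗ ρ^{⊗(n-ℓ)}. Then Tr(Dᵢ(x) Dⱼ(x)) = (n/2ⁿ)(1+‖x‖²)^{n-1} δᵢⱼ + (n(n-1)/2ⁿ)(1+‖x‖²)^{n-2} xᵢ xⱼ. -/

import Mathlib

open Matrix

noncomputable def pauli : Fin 3 → Matrix (Fin 2) (Fin 2) ℂ :=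
  ![!![0, 1; 1, 0], !![0, -Complex.I; Complex.I, 0], !![1, 0; 0, -1]]

noncomputable def blochRho (x : EuclideanSpace ℝ (Fin 3)) : Matrix (Fin 2) (Fin 2) ℂ :=
  (1 / 2 : ℂ) • (1 + (x 0 : ℂ) • pauli 0 + (x 1 : ℂ) • pauli 1 + (x 2 : ℂ) • pauli 2)

/-- The `n`-fold tangent vector `Dᵢ(x) = Σ_ℓ ρ^{⊗(ℓ-1)} ⊗ (σᵢ/2) ⊗ ρ^{⊗(n-ℓ)}`, written
entrywise: the `ℓ`-th summand is the tensor product with `σᵢ/2` in slot `ℓ` and `ρ(x)`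
in every other slot. -/
noncomputable def tangentD (n : ℕ) (x : EuclideanSpace ℝ (Fin 3)) (i : Fin 3) :
    Matrix (Fin n → Fin 2) (Fin n → Fin 2) ℂ :=
  ∑ ℓ : Fin n, Matrix.of fun a b =>
    ∏ k : Fin n,
      if k = ℓ then ((1 / 2 : ℂ) • pauli i) (a k) (b k) else blochRho x (a k) (b k)

lemma blochRho_eq (x : EuclideanSpace ℝ (Fin 3)) :
    blochRho x = (1/2 : ℂ) • !![1 + (x 2 : ℂ), (x 0 : ℂ) - Complex.I * x 1;
      (x 0 : ℂ) + Complex.I * x 1, 1 - (x 2 : ℂ)] := by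
  ext a b
  fin_cases a <;> fin_cases b <;>
    simp [blochRho, pauli, Matrix.one_apply] <;> ring

lemma trace_rho_rho (x : EuclideanSpace ℝ (Fin 3)) :
    (blochRho x * blochRho x).trace = ((1 + ‖x‖^2 : ℝ) : ℂ) / 2 := by
  have hnorm : ((‖x‖^2 : ℝ) : ℂ) = (x 0:ℂ)^2 + (x 1:ℂ)^2 + (x 2:ℂ)^2 := by
    have : ‖x‖^2 = ∑ k, x k ^ 2 := by
      rw [EuclideanSpace.norm_eq, Real.sq_sqrt (by positivity)]
      simp [Real.norm_eq_abs, sq_abs]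
    rw [this, Fin.sum_univ_three]
    push_cast
    ring
  rw [blochRho_eq]
  simp [Matrix.trace, Matrix.mul_apply, Fin.sum_univ_two, Matrix.diag]
  push_cast at hnorm ⊢
  rw [hnorm]
  ring_nf
  rw [Complex.I_sq]
  ring

lemma trace_pauli_rho (x : EuclideanSpace ℝ (Fin 3)) (i : Fin 3) :
    (((1/2 : ℂ) • pauli i) * blochRho x).trace = (x i : ℂ) / 2 := by
  rw [blochRho_eq]
  fin_cases i <;>
    simp [pauli, Matrix.trace, Matrix.mul_apply, Fin.sum_univ_two, Matrix.diag] <;> ring_nf <;>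
    simp [Complex.I_sq] <;> ring

lemma trace_rho_pauli (x : EuclideanSpace ℝ (Fin 3)) (j : Fin 3) :
    (blochRho x * ((1/2 : ℂ) • pauli j)).trace = (x j : ℂ) / 2 := by
  rw [blochRho_eq]
  fin_cases j <;>
    simp [pauli, Matrix.trace, Matrix.mul_apply, Fin.sum_univ_two, Matrix.diag] <;> ring_nf <;>
    simp [Complex.I_sq] <;> ring

lemma trace_pauli_pauli (i j : Fin 3) :
    (((1/2 : ℂ) • pauli i) * ((1/2 : ℂ) • pauli j)).trace =
      (if i = j then (1:ℂ) else 0) / 2 := by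
  fin_cases i <;> fin_cases j <;>
    simp [pauli, Matrix.trace, Matrix.mul_apply, Fin.sum_univ_two, Matrix.diag] <;>
    norm_num [Complex.ext_iff]

lemma trace_tensor {n : ℕ} (f g : Fin n → Matrix (Fin 2) (Fin 2) ℂ) :
    ((Matrix.of fun a b : Fin n → Fin 2 => ∏ k, f k (a k) (b k)) *
     (Matrix.of fun a b : Fin n → Fin 2 => ∏ k, g k (a k) (b k))).trace
    = ∏ k, (f k * g k).trace := by
  classical
  have hR : ∀ k, (f k * g k).trace = ∑ p : Fin 2 × Fin 2, f k p.1 p.2 * g k p.2 p.1 := by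
    intro k
    rw [Fintype.sum_prod_type]
    simp [Matrix.trace, Matrix.mul_apply, Matrix.diag, Finset.sum_comm]
  calc ((Matrix.of fun a b : Fin n → Fin 2 => ∏ k, f k (a k) (b k)) *
     (Matrix.of fun a b : Fin n → Fin 2 => ∏ k, g k (a k) (b k))).trace
      = ∑ a : Fin n → Fin 2, ∑ b : Fin n → Fin 2, ∏ k, (f k (a k) (b k) * g k (b k) (a k)) := by
        simp [Matrix.trace, Matrix.mul_apply, Matrix.diag, Finset.prod_mul_distrib]
    _ = ∑ c : Fin n → Fin 2 × Fin 2, ∏ k, (f k (c k).1 (c k).2 * g k (c k).2 (c k).1) := by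
        rw [← Fintype.sum_prod_type']
        exact (Fintype.sum_equiv (Equiv.arrowProdEquivProdArrow (Fin n) (fun _ => Fin 2) (fun _ => Fin 2))
          _ _ (fun p => rfl)).symm
    _ = ∏ k, ∑ p : Fin 2 × Fin 2, f k p.1 p.2 * g k p.2 p.1 := by
        rw [Finset.prod_univ_sum]
        simp
    _ = ∏ k, (f k * g k).trace := Finset.prod_congr rfl fun k _ => (hR k).symm

lemma prod_ite_one {n : ℕ} (ℓ : Fin n) (a b : ℂ) :
    ∏ k : Fin n, (if k = ℓ then a else b) = a * b ^ (n - 1) := by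
  rw [← Finset.mul_prod_erase Finset.univ _ (Finset.mem_univ ℓ), if_pos rfl]
  congr 1
  rw [Finset.prod_congr rfl (fun k hk => if_neg (Finset.ne_of_mem_erase hk)),
    Finset.prod_const, Finset.card_erase_of_mem (Finset.mem_univ ℓ), Finset.card_univ,
    Fintype.card_fin]

lemma prod_ite_two {n : ℕ} {ℓ m : Fin n} (h : ℓ ≠ m) (a b c : ℂ) :
    ∏ k : Fin n, (if k = ℓ then a else if k = m then b else c) = a * b * c ^ (n - 2) := by
  have hm : m ∈ Finset.univ.erase ℓ := Finset.mem_erase.mpr ⟨h.symm, Finset.mem_univ m⟩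
  have hrw : ∀ k ∈ (Finset.univ.erase ℓ).erase m,
      (if k = ℓ then a else if k = m then b else c) = c := by
    intro k hk
    rw [if_neg (Finset.ne_of_mem_erase (Finset.mem_of_mem_erase hk)),
      if_neg (Finset.ne_of_mem_erase hk)]
  rw [← Finset.mul_prod_erase Finset.univ _ (Finset.mem_univ ℓ), if_pos rfl,
    ← Finset.mul_prod_erase _ _ hm, if_neg h.symm, if_pos rfl, ← mul_assoc,
    Finset.prod_congr rfl hrw, Finset.prod_const,
    Finset.card_erase_of_mem hm, Finset.card_erase_of_mem (Finset.mem_univ ℓ),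
    Finset.card_univ, Fintype.card_fin]
  congr 2

theorem tangentD_metric (n : ℕ) (hn : 1 ≤ n) (x : EuclideanSpace ℝ (Fin 3)) (i j : Fin 3) :
    (tangentD n x i * tangentD n x j).trace =
      ((n : ℂ) / 2 ^ n) * (((1 + ‖x‖ ^ 2 : ℝ)) : ℂ) ^ (n - 1) * (if i = j then 1 else 0) +
        ((n : ℂ) * ((n : ℂ) - 1) / 2 ^ n) * (((1 + ‖x‖ ^ 2 : ℝ)) : ℂ) ^ (n - 2) *
          (x i : ℂ) * (x j : ℂ) := by
  classical
  set r : ℂ := (((1 + ‖x‖ ^ 2 : ℝ)) : ℂ) with hr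
  set δ : ℂ := if i = j then 1 else 0 with hδ
  have hD : ∀ i, tangentD n x i = ∑ ℓ : Fin n, Matrix.of (fun a b : Fin n → Fin 2 =>
      ∏ k, (if k = ℓ then (1/2 : ℂ) • pauli i else blochRho x) (a k) (b k)) := by
    intro i
    unfold tangentD
    refine Finset.sum_congr rfl fun ℓ _ => ?_
    ext a b
    simp only [Matrix.of_apply]
    exact Finset.prod_congr rfl fun k _ => by split_ifs <;> rfl
  rw [hD i, hD j, Finset.sum_mul_sum, Matrix.trace_sum]
  simp_rw [Matrix.trace_sum]
  have key : ∀ ℓ m : Fin n,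
      ((Matrix.of (fun a b : Fin n → Fin 2 =>
          ∏ k, (if k = ℓ then (1/2 : ℂ) • pauli i else blochRho x) (a k) (b k))) *
       (Matrix.of (fun a b : Fin n → Fin 2 =>
          ∏ k, (if k = m then (1/2 : ℂ) • pauli j else blochRho x) (a k) (b k)))).trace =
      if ℓ = m then (δ/2) * (r/2)^(n-1)
      else ((x i : ℂ)/2) * ((x j : ℂ)/2) * (r/2)^(n-2) := by
    intro ℓ m
    rw [trace_tensor]
    by_cases h : ℓ = m
    · subst h
      rw [if_pos rfl]
      have hf : ∀ k : Fin n,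
          ((if k = ℓ then (1/2 : ℂ) • pauli i else blochRho x) *
           (if k = ℓ then (1/2 : ℂ) • pauli j else blochRho x)).trace =
          if k = ℓ then δ/2 else r/2 := by
        intro k
        split_ifs with hk
        · rw [trace_pauli_pauli]
        · rw [trace_rho_rho]
      rw [Finset.prod_congr rfl fun k _ => hf k, prod_ite_one]
    · rw [if_neg h]
      have hf : ∀ k : Fin n,
          ((if k = ℓ then (1/2 : ℂ) • pauli i else blochRho x) *
           (if k = m then (1/2 : ℂ) • pauli j else blochRho x)).trace =
          if k = ℓ then (x i : ℂ)/2 else if k = m then (x j : ℂ)/2 else r/2 := by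
        intro k
        by_cases h1 : k = ℓ
        · subst h1
          rw [if_pos rfl, if_pos rfl, if_neg h, trace_pauli_rho]
        · by_cases h2 : k = m
          · subst h2
            rw [if_neg h1, if_pos rfl, if_neg h1, if_pos rfl, trace_rho_pauli]
          · rw [if_neg h1, if_neg h2, if_neg h1, if_neg h2, trace_rho_rho]
      rw [Finset.prod_congr rfl fun k _ => hf k, prod_ite_two h]
  simp_rw [key]
  have hsum : ∀ (c d : ℂ), (∑ ℓ : Fin n, ∑ m : Fin n, if ℓ = m then c else d)
      = (n : ℂ) * c + (n : ℂ) * ((n : ℂ) - 1) * d := by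
    intro c d
    have hinner : ∀ ℓ : Fin n, (∑ m : Fin n, if ℓ = m then c else d)
        = c + ((n : ℂ) - 1) * d := by
      intro ℓ
      have : ∀ m : Fin n, (if ℓ = m then c else d) = d + (if ℓ = m then c - d else 0) :=
        fun m => by split_ifs <;> ring
      simp_rw [this]
      rw [Finset.sum_add_distrib, Finset.sum_const, Finset.sum_ite_eq,
        if_pos (Finset.mem_univ ℓ), Finset.card_univ, Fintype.card_fin, nsmul_eq_mul]
      ring
    simp_rw [hinner]
    rw [Finset.sum_const, Finset.card_univ, Fintype.card_fin, nsmul_eq_mul]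
    ring
  rw [hsum]
  obtain ⟨k, rfl⟩ : ∃ k, n = k + 1 := ⟨n - 1, by omega⟩
  simp only [Nat.add_sub_cancel]
  rcases k with _ | k
  · push_cast
    norm_num
    ring
  · have h2 : k + 1 + 1 - 2 = k := by omega
    rw [h2, div_pow, div_pow]
    push_cast
    field_simp
    ring
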